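/- Let A and B be bounded linear operators on a complex Banach space and let n ∈ ℕ. Then (A²+B²)^n / n! = lim_{m→∞} Σ_{α∈ℕ^{2m}, |α|=n} (1/(m^n · α!)) · A^{2α₁} B^{2α₂} A^{2α₃} B^{2α₄} ⋯ A^{2α_{2m−1}} B^{2α_{2m}}, the limit being taken in operator norm. -/

import Mathlib

set_option synthInstance.maxHeartbeats 1000000
set_option maxHeartbeats 1000000

open Filter Finset

namespace Stmt17Aux

/-- Expansion of `(x+y)^n` as a sum over words. -/
lemma word_expansion {R : Type*} [Semiring R] (x y : R) : ∀ n : ℕ,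
    (x + y) ^ n = ∑ p : Fin n → Bool, (List.ofFn fun j => bif p j then x else y).prod
  | 0 => by simp
  | (n+1) => by
    rw [pow_succ', word_expansion x y n]
    rw [← (Fin.consEquiv (fun _ : Fin (n+1) => Bool)).sum_comp
      (fun p => (List.ofFn fun j => bif p j then x else y).prod)]
    rw [Fintype.sum_prod_type]
    simp only [Fin.consEquiv_apply, List.ofFn_succ, Fin.cons_zero, Fin.cons_succ, List.prod_cons,
      ← Finset.mul_sum]
    rw [Fintype.sum_bool]
    simp [add_mul]

lemma flatten_ite_map {ι β : Type*} (P : ι → Prop) [DecidablePred P] (f : ι → β) :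
    ∀ l : List ι, (l.map fun i => if P i then [f i] else []).flatten
      = (l.filter fun i => decide (P i)).map f
  | [] => rfl
  | (a :: l) => by
    simp only [List.map_cons, List.flatten_cons, List.filter_cons, flatten_ite_map P f l]
    by_cases h : P a <;> simp [h]

lemma filter_finRange_eq_ofFn {N n : ℕ} {w : Fin n → Fin N} (hw : StrictMono w) :
    ((List.finRange N).filter fun i => decide (∃ j, w j = i)) = List.ofFn w := by
  have hs2 : (List.ofFn w).Pairwise (· < ·) := (List.sortedLT_ofFn_iff.mpr hw).pairwise
  have hs1 : ((List.finRange N).filter fun i => decide (∃ j, w j = i)).Pairwise (· < ·) :=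
    (List.pairwise_lt_finRange N).filter _
  refine List.Perm.eq_of_pairwise (fun a b _ _ h1 h2 => absurd (h1.trans h2) (lt_irrefl a)) hs1 hs2 ?_
  refine List.perm_of_nodup_nodup_toFinset_eq (hs1.nodup) (hs2.nodup) ?_
  ext i
  simp [List.mem_ofFn, List.mem_filter, Set.mem_range]



/-- the parity word of a tuple -/
def pl {N : ℕ} (α : Fin N → ℕ) : List Bool :=
  (List.ofFn fun i : Fin N => List.replicate (α i) (decide ((i : ℕ) % 2 = 0))).flatten

lemma length_pl {N : ℕ} (α : Fin N → ℕ) : (pl α).length = ∑ i, α i := by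
  simp [pl, List.length_flatten, List.map_ofFn, Function.comp_def, Fin.sum_ofFn]

def key (n : ℕ) {N : ℕ} (α : Fin N → ℕ) : Fin n → Bool := fun j => (pl α).getD j true

lemma ofFn_key {N n : ℕ} (α : Fin N → ℕ) (h : (pl α).length = n) :
    List.ofFn (key n α) = pl α := by
  apply List.ext_getElem (by simp [h])
  intro i h1 h2
  simp only [List.getElem_ofFn, key]
  rw [List.getD_eq_getElem _ _ (by omega)]

lemma prod_pow_eq {R : Type*} [Monoid R] (A B : R) {N : ℕ} (α : Fin N → ℕ) :
    (List.ofFn fun i : Fin N => (if (i : ℕ) % 2 = 0 then A else B) ^ (2 * α i)).prod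
      = ((pl α).map fun b => bif b then A ^ 2 else B ^ 2).prod := by
  rw [pl, List.map_flatten, List.map_ofFn, List.prod_flatten, List.map_ofFn]
  refine congrArg List.prod (congrArg List.ofFn (funext fun i => ?_))
  simp only [Function.comp_apply, List.map_replicate, List.prod_replicate, Bool.cond_decide]
  rw [show (if ((i:ℕ) % 2 = 0) then A ^ 2 else B ^ 2) = (if ((i:ℕ) % 2 = 0) then A else B) ^ 2
    from by split <;> rfl, ← pow_mul]



def wα {n N : ℕ} (w : Fin n → Fin N) : Fin N → ℕ := fun i => if ∃ j, w j = i then 1 else 0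

lemma sum_wα {n N : ℕ} {w : Fin n → Fin N} (hw : Function.Injective w) :
    ∑ i, wα w i = n := by
  have : ∑ i, wα w i = ∑ i ∈ univ.filter (fun i => ∃ j, w j = i), 1 := by
    rw [Finset.sum_filter]; simp [wα]
  rw [this, Finset.sum_const, smul_eq_mul, mul_one]
  have : univ.filter (fun i => ∃ j, w j = i) = univ.image w := by
    ext x; simp [eq_comm]
  rw [this, Finset.card_image_of_injective _ hw, card_univ, Fintype.card_fin]

lemma prod_factorial_wα {n N : ℕ} (w : Fin n → Fin N) :
    ∏ i, (wα w i).factorial = 1 :=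
  Finset.prod_eq_one fun i _ => by unfold wα; split <;> rfl

lemma pl_wα {n N : ℕ} {w : Fin n → Fin N} (hw : StrictMono w) :
    pl (wα w) = List.ofFn fun j => decide ((w j : ℕ) % 2 = 0) := by
  unfold pl wα
  have h1 : ∀ i : Fin N,
      List.replicate (if ∃ j, w j = i then 1 else 0) (decide ((i:ℕ) % 2 = 0))
        = if (∃ j, w j = i) then [decide ((i:ℕ) % 2 = 0)] else [] := by
    intro i; split <;> simp
  simp only [h1]
  rw [List.ofFn_eq_map, flatten_ite_map, filter_finRange_eq_ofFn hw, List.map_ofFn]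
  rfl

lemma key_wα {n N : ℕ} {w : Fin n → Fin N} (hw : StrictMono w) :
    key n (wα w) = fun j => decide ((w j : ℕ) % 2 = 0) := by
  funext j
  rw [key, pl_wα hw, List.getD_eq_getElem _ _ (by simp [j.isLt])]
  simp

def wfun (m n : ℕ) (p : Fin n → Bool) (q : Fin n → Fin m) : Fin n → Fin (2*m) :=
  fun j => ⟨2 * (q j : ℕ) + (bif p j then 0 else 1), by
    have h := (q j).isLt; cases p j <;> simp <;> omega⟩

lemma wfun_strictMono {m n : ℕ} {p : Fin n → Bool} {q : Fin n → Fin m}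
    (hq : StrictMono q) : StrictMono (wfun m n p q) := by
  intro j j' h
  have h2 : (q j : ℕ) < q j' := hq h
  simp only [wfun, Fin.mk_lt_mk]
  cases p j <;> cases p j' <;> simp <;> omega

lemma key_wfun {m n : ℕ} (p : Fin n → Bool) {q : Fin n → Fin m} (hq : StrictMono q) :
    key n (wα (wfun m n p q)) = p := by
  rw [key_wα (wfun_strictMono hq)]
  funext j
  cases hb : p j <;> simp [wfun, hb] <;> omega


def Phi (m n : ℕ) (p : Fin n → Bool) (s : Finset (Fin m)) : Fin (2*m) → ℕ :=
  if h : s.card = n then wα (wfun m n p (s.orderEmbOfFin h)) else 0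

noncomputable def cc (n : ℕ) (p : Fin n → Bool) (m : ℕ) : ℝ :=
  ∑ α ∈ (Finset.Nat.antidiagonalTuple (2*m) n).filter (fun α => key n α = p),
    (∏ i, ((α i).factorial : ℝ))⁻¹

lemma choose_le_cc (m n : ℕ) (p : Fin n → Bool) :
    (m.choose n : ℝ) ≤ cc n p m := by
  classical
  set D := Finset.powersetCard n (univ : Finset (Fin m)) with hD
  have hmemD : ∀ s ∈ D, s.card = n := fun s hs => (Finset.mem_powersetCard_univ).1 hs
  -- injectivity
  have hinj : Set.InjOn (Phi m n p) D := by
    intro s₁ hs₁ s₂ hs₂ heq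
    have h₁ := hmemD s₁ hs₁
    have h₂ := hmemD s₂ hs₂
    rw [Phi, dif_pos h₁, Phi, dif_pos h₂] at heq
    set w₁ := wfun m n p (s₁.orderEmbOfFin h₁) with hw₁
    set w₂ := wfun m n p (s₂.orderEmbOfFin h₂) with hw₂
    have hsm₁ : StrictMono w₁ := wfun_strictMono (s₁.orderEmbOfFin h₁).strictMono
    have hsm₂ : StrictMono w₂ := wfun_strictMono (s₂.orderEmbOfFin h₂).strictMono
    have hmemiff : ∀ i, (∃ j, w₁ j = i) ↔ (∃ j, w₂ j = i) := by
      intro i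
      have h3 := congrFun heq i
      simp only [wα] at h3
      split_ifs at h3 with h4 h5 <;> tauto
    have hw : w₁ = w₂ := by
      set T := univ.image w₁ with hT
      have hTcard : T.card = n := by
        rw [hT, Finset.card_image_of_injective _ hsm₁.injective, card_univ, Fintype.card_fin]
      have e₁ : w₁ = T.orderEmbOfFin hTcard :=
        Finset.orderEmbOfFin_unique hTcard (fun j => Finset.mem_image_of_mem _ (mem_univ j)) hsm₁
      have e₂ : w₂ = T.orderEmbOfFin hTcard := by
        refine Finset.orderEmbOfFin_unique hTcard (fun j => ?_) hsm₂
        rw [hT, Finset.mem_image]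
        obtain ⟨j', hj'⟩ := (hmemiff (w₂ j)).2 ⟨j, rfl⟩
        exact ⟨j', mem_univ _, hj'⟩
      rw [e₁, e₂]
    have hq : ∀ j, s₁.orderEmbOfFin h₁ j = s₂.orderEmbOfFin h₂ j := by
      intro j
      have := congrFun hw j
      simp only [hw₁, hw₂, wfun, Fin.mk.injEq] at this
      exact Fin.ext (by omega)
    have : (s₁ : Set (Fin m)) = s₂ := by
      rw [← Finset.range_orderEmbOfFin s₁ h₁, ← Finset.range_orderEmbOfFin s₂ h₂]
      have hfe : ⇑(s₁.orderEmbOfFin h₁) = ⇑(s₂.orderEmbOfFin h₂) := funext hq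
      rw [hfe]
    exact_mod_cast Finset.coe_inj.1 this
  -- image is inside the fiber
  have hsub : D.image (Phi m n p) ⊆
      (Finset.Nat.antidiagonalTuple (2*m) n).filter (fun α => key n α = p) := by
    intro α hα
    obtain ⟨s, hs, rfl⟩ := Finset.mem_image.1 hα
    have h₁ := hmemD s hs
    rw [Phi, dif_pos h₁]
    refine Finset.mem_filter.2 ⟨Finset.Nat.mem_antidiagonalTuple.2 ?_, ?_⟩
    · exact sum_wα (wfun_strictMono (s.orderEmbOfFin h₁).strictMono).injective
    · exact key_wfun p (s.orderEmbOfFin h₁).strictMono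
  -- each image term equals 1
  have hone : ∀ α ∈ D.image (Phi m n p), (∏ i, ((α i).factorial : ℝ))⁻¹ = 1 := by
    intro α hα
    obtain ⟨s, hs, rfl⟩ := Finset.mem_image.1 hα
    have h₁ := hmemD s hs
    rw [Phi, dif_pos h₁]
    rw [← Nat.cast_prod, prod_factorial_wα, Nat.cast_one, inv_one]
  calc (m.choose n : ℝ) = ((D.image (Phi m n p)).card : ℝ) := by
        rw [Finset.card_image_of_injOn hinj, hD, Finset.card_powersetCard, card_univ,
          Fintype.card_fin]
    _ = ∑ α ∈ D.image (Phi m n p), (∏ i, ((α i).factorial : ℝ))⁻¹ := by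
        rw [Finset.sum_congr rfl hone, Finset.sum_const, nsmul_eq_mul, mul_one]
    _ ≤ cc n p m := by
        refine Finset.sum_le_sum_of_subset_of_nonneg hsub (fun α _ _ => ?_)
        positivity


lemma sum_inv_factorial_eq (N n : ℕ) :
    ∑ α ∈ Finset.Nat.antidiagonalTuple N n, (∏ i, ((α i).factorial : ℝ))⁻¹
      = (N : ℝ)^n / n.factorial := by
  classical
  have hpow := Finset.sum_pow_eq_sum_piAntidiag (univ : Finset (Fin N)) (fun _ => (1:ℝ)) n
  rw [Finset.piAntidiag_univ_fin_eq_antidiagonalTuple] at hpow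
  simp only [Finset.sum_const, card_univ, Fintype.card_fin, nsmul_eq_mul, mul_one, one_pow,
    Finset.prod_const_one] at hpow
  have hterm : ∀ k ∈ Finset.Nat.antidiagonalTuple N n,
      (∏ i, ((k i).factorial : ℝ))⁻¹ = (Nat.multinomial univ k : ℝ) / n.factorial := by
    intro k hk
    have hspec := Nat.multinomial_spec (univ : Finset (Fin N)) k
    rw [Finset.Nat.mem_antidiagonalTuple.1 hk] at hspec
    have hcast : (∏ i, ((k i).factorial : ℝ)) * (Nat.multinomial univ k : ℝ)
        = (n.factorial : ℝ) := by exact_mod_cast congrArg (Nat.cast : ℕ → ℝ) hspec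
    have hpos : (0:ℝ) < ∏ i, ((k i).factorial : ℝ) := by positivity
    field_simp
    nlinarith [hcast]
  rw [Finset.sum_congr rfl hterm, ← Finset.sum_div]
  rw [← hpow]

lemma sum_cc (n m : ℕ) :
    ∑ p : Fin n → Bool, cc n p m = ((2*m : ℕ) : ℝ)^n / n.factorial := by
  classical
  rw [← sum_inv_factorial_eq (2*m) n]
  unfold cc
  exact Finset.sum_fiberwise_of_maps_to (fun α _ => mem_univ _) _

lemma tendsto_choose_div : ∀ n : ℕ, Tendsto (fun m : ℕ => (m.choose n : ℝ) / (m:ℝ)^n)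
    atTop (nhds ((n.factorial : ℝ))⁻¹) := by
  intro n
  have hd : Tendsto (fun m : ℕ => ((m.descFactorial n : ℕ) : ℝ) / (m:ℝ)^n) atTop (nhds 1) := by
    have hlim : Tendsto (fun m : ℕ => ∏ i ∈ Finset.range n, (1 - (i:ℝ)/(m:ℝ))) atTop
        (nhds 1) := by
      have := tendsto_finset_prod (Finset.range n)
        (fun i _ => (tendsto_const_nhds.sub (tendsto_const_div_atTop_nhds_zero_nat (i:ℝ)) :
          Tendsto (fun m : ℕ => (1:ℝ) - (i:ℝ)/(m:ℝ)) atTop (nhds (1 - 0))))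
      simpa using this
    refine Tendsto.congr' ?_ hlim
    filter_upwards [eventually_ge_atTop (n+1)] with m hm
    have hmpos : 0 < m := by omega
    have hm0 : (m:ℝ) ≠ 0 := by positivity
    rw [Nat.descFactorial_eq_prod_range, Nat.cast_prod]
    rw [show ((m:ℝ))^n = ∏ _i ∈ Finset.range n, (m:ℝ) by
      rw [Finset.prod_const, Finset.card_range]]
    rw [← Finset.prod_div_distrib]
    refine (Finset.prod_congr rfl fun i hi => ?_).symm
    have hi' : i < n := Finset.mem_range.1 hi
    rw [Nat.cast_sub (by omega), sub_div, div_self hm0]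
  have hf : (n.factorial:ℝ) ≠ 0 := by positivity
  have heq : ∀ m : ℕ, (m.choose n : ℝ)/(m:ℝ)^n
      = ((m.descFactorial n : ℕ):ℝ)/(m:ℝ)^n * ((n.factorial:ℝ))⁻¹ := by
    intro m
    have h1 : ((m.descFactorial n : ℕ):ℝ) = (n.factorial : ℝ) * (m.choose n : ℝ) := by
      exact_mod_cast congrArg (Nat.cast : ℕ → ℝ) (Nat.descFactorial_eq_factorial_mul_choose m n)
    rw [h1, div_mul_eq_mul_div, mul_right_comm, mul_inv_cancel₀ hf, one_mul]
  simp only [heq]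
  simpa using hd.mul_const ((n.factorial:ℝ))⁻¹


lemma tendsto_coeff (n : ℕ) (p : Fin n → Bool) :
    Tendsto (fun m : ℕ => ((m:ℝ)^n)⁻¹ * cc n p m) atTop (nhds ((n.factorial : ℝ))⁻¹) := by
  classical
  have hf : (n.factorial:ℝ) ≠ 0 := by positivity
  have hb := tendsto_choose_div n
  have hupperlim : Tendsto (fun m : ℕ => (2:ℝ)^n / n.factorial
      - ((2:ℝ)^n - 1) * ((m.choose n : ℝ)/(m:ℝ)^n)) atTop (nhds ((n.factorial:ℝ))⁻¹) := by
    have h2 := (tendsto_const_nhds (x := (2:ℝ)^n / n.factorial) (f := atTop)).sub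
      (hb.const_mul ((2:ℝ)^n - 1))
    have hval : ((n.factorial:ℝ))⁻¹ = (2:ℝ)^n / n.factorial - ((2:ℝ)^n - 1) * ((n.factorial:ℝ))⁻¹ := by
      field_simp
      ring
    rw [hval]
    exact h2
  refine tendsto_of_tendsto_of_tendsto_of_le_of_le' hb hupperlim ?_ ?_
  · filter_upwards [eventually_ge_atTop 1] with m hm
    rw [div_eq_inv_mul]
    exact mul_le_mul_of_nonneg_left (choose_le_cc m n p) (by positivity)
  · filter_upwards [eventually_ge_atTop 1] with m hm
    have hm0 : (m:ℝ) ≠ 0 := by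
      have : 0 < m := hm
      positivity
    have htot := sum_cc n m
    have hsplit : cc n p m = ((2*m:ℕ):ℝ)^n / n.factorial - ∑ q ∈ univ.erase p, cc n q m := by
      rw [← htot, ← Finset.add_sum_erase univ (fun q => cc n q m) (mem_univ p)]
      ring
    have hrest : ((2:ℝ)^n - 1) * (m.choose n : ℝ) ≤ ∑ q ∈ univ.erase p, cc n q m := by
      have hcard : ((univ.erase p).card : ℝ) = (2:ℝ)^n - 1 := by
        rw [Finset.card_erase_of_mem (mem_univ p), card_univ]
        have h3 : Fintype.card (Fin n → Bool) = 2^n := by simp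
        rw [h3, Nat.cast_sub (Nat.one_le_pow _ _ (by norm_num))]
        push_cast
        ring
      calc ((2:ℝ)^n - 1) * (m.choose n : ℝ) = ∑ _q ∈ univ.erase p, (m.choose n : ℝ) := by
            rw [Finset.sum_const, nsmul_eq_mul, hcard]
        _ ≤ _ := Finset.sum_le_sum fun q _ => choose_le_cc m n q
    calc ((m:ℝ)^n)⁻¹ * cc n p m
        ≤ ((m:ℝ)^n)⁻¹ * (((2*m:ℕ):ℝ)^n / n.factorial - ((2:ℝ)^n - 1) * (m.choose n : ℝ)) := by
          refine mul_le_mul_of_nonneg_left ?_ (by positivity)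
          rw [hsplit]
          linarith [hrest]
      _ = (2:ℝ)^n / n.factorial - ((2:ℝ)^n - 1) * ((m.choose n:ℝ)/(m:ℝ)^n) := by
          push_cast
          field_simp
          ring

end Stmt17Aux

open Stmt17Aux in
theorem stmt17 {H : Type*} [NormedAddCommGroup H] [NormedSpace ℂ H]
    (A B : H →L[ℂ] H) (n : ℕ) :
    Tendsto (fun m : ℕ =>
        ∑ α ∈ Finset.Nat.antidiagonalTuple (2*m) n,
          (((m : ℝ)^n * ∏ i, (Nat.factorial (α i) : ℝ))⁻¹) •
            (List.ofFn (fun i : Fin (2*m) =>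
              (if (i : ℕ) % 2 = 0 then A else B) ^ (2 * α i))).prod)
      atTop (nhds ((Nat.factorial n : ℝ)⁻¹ • (A^2 + B^2)^n)) := by
  classical
  have hrw : ∀ m : ℕ,
      (∑ α ∈ Finset.Nat.antidiagonalTuple (2*m) n,
        (((m : ℝ)^n * ∏ i, (Nat.factorial (α i) : ℝ))⁻¹) •
          (List.ofFn (fun i : Fin (2*m) =>
            (if (i : ℕ) % 2 = 0 then A else B) ^ (2 * α i))).prod)
      = ∑ p : Fin n → Bool, (((m:ℝ)^n)⁻¹ * cc n p m) •
          (List.ofFn fun j : Fin n => bif p j then A^2 else B^2).prod := by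
    intro m
    have step1 : ∀ α ∈ Finset.Nat.antidiagonalTuple (2*m) n,
        (((m : ℝ)^n * ∏ i, (Nat.factorial (α i) : ℝ))⁻¹) •
          (List.ofFn (fun i : Fin (2*m) =>
            (if (i : ℕ) % 2 = 0 then A else B) ^ (2 * α i))).prod
        = (((m : ℝ)^n * ∏ i, (Nat.factorial (α i) : ℝ))⁻¹) •
          (List.ofFn fun j : Fin n => bif key n α j then A^2 else B^2).prod := by
      intro α hα
      rw [prod_pow_eq]
      have hlen : (pl α).length = n := by
        rw [length_pl, Finset.Nat.mem_antidiagonalTuple.1 hα]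
      rw [← ofFn_key α hlen, List.map_ofFn]
      rfl
    rw [Finset.sum_congr rfl step1]
    rw [← Finset.sum_fiberwise_of_maps_to (g := fun α => key n α)
      (t := (univ : Finset (Fin n → Bool))) (fun α _ => mem_univ _)]
    refine Finset.sum_congr rfl fun p _ => ?_
    have step2 : ∀ α ∈ (Finset.Nat.antidiagonalTuple (2*m) n).filter
        (fun α => key n α = p),
        (((m : ℝ)^n * ∏ i, (Nat.factorial (α i) : ℝ))⁻¹) •
          (List.ofFn fun j : Fin n => bif key n α j then A^2 else B^2).prod
        = (((m:ℝ)^n)⁻¹ * (∏ i, (Nat.factorial (α i) : ℝ))⁻¹) •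
          (List.ofFn fun j : Fin n => bif p j then A^2 else B^2).prod := by
      intro α hα
      rw [(Finset.mem_filter.1 hα).2, mul_inv]
    rw [Finset.sum_congr rfl step2, ← Finset.sum_smul, ← Finset.mul_sum]
    rfl
  simp only [hrw]
  have hexp : ((Nat.factorial n : ℝ))⁻¹ • (A^2 + B^2)^n
      = ∑ p : Fin n → Bool, ((Nat.factorial n : ℝ))⁻¹ •
          (List.ofFn fun j : Fin n => bif p j then A^2 else B^2).prod := by
    rw [word_expansion (A^2) (B^2) n, Finset.smul_sum]
  rw [hexp]
  exact tendsto_finset_sum _ fun p _ => (tendsto_coeff n p).smul_const _
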